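/- Let e ≥ 1, let ζ ∈ ℂ be a primitive e-th root of unity, let n ≥ 1 and let d, d₁, …, dₙ be positive integers with e dividing d₁. Let w ∈ GLₙ(ℂ) be the diagonal matrix with entries ζ^{1−d₁}, …, ζ^{1−dₙ}, and let f ∈ ℂ[x₁,…,xₙ] be homogeneous of degree d, invariant under w, with f(e₁) = 0, where e₁ = (1,0,…,0). If d ≢ dₖ (mod e) for all k ∈ {2,…,n}, then all partial derivatives of f vanish at e₁; that is, the projective hypersurface Z(f) is singular at the point [e₁]. -/

import Mathlib

noncomputable section
open MvPolynomial Matrix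

private lemma degree_single'' {α : Type*} (a : α) (k : ℕ) :
    (Finsupp.single a k).degree = k := by
  classical
  by_cases hk : k = 0
  · subst hk; simp [Finsupp.degree]
  · exact Finsupp.degree_single a k

private lemma degree_add'' {α : Type*} (f g : α →₀ ℕ) :
    (f + g).degree = f.degree + g.degree := by
  classical
  show (f + g).sum (fun _ k => k) = f.sum (fun _ k => k) + g.sum (fun _ k => k)
  exact Finsupp.sum_add_index' (fun _ => rfl) (fun _ _ _ => rfl)

private lemma coeff_pderiv' {n : ℕ} (i : Fin n) (f : MvPolynomial (Fin n) ℂ) (m : Fin n →₀ ℕ) :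
    coeff m (pderiv i f) = ((m i : ℂ) + 1) * coeff (m + Finsupp.single i 1) f := by
  classical
  induction f using MvPolynomial.induction_on' with
  | add p q hp hq => simp [hp, hq, mul_add]
  | monomial s a =>
    rw [pderiv_monomial, coeff_monomial, coeff_monomial]
    by_cases hs : s = m + Finsupp.single i 1
    · subst hs
      have hcan : m + Finsupp.single i 1 - Finsupp.single i 1 = m :=
        add_tsub_cancel_right _ _
      rw [if_pos hcan, if_pos rfl]
      have h2 : (m + Finsupp.single i 1 : Fin n →₀ ℕ) i = m i + 1 := by
        rw [Finsupp.add_apply, Finsupp.single_eq_same]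
      rw [h2]
      push_cast
      ring
    · rw [if_neg hs, mul_zero]
      by_cases h2 : s - Finsupp.single i 1 = m
      · rw [if_pos h2]
        have hsi : s i = 0 := by
          by_contra hne
          apply hs
          ext j
          have hj := DFunLike.congr_fun h2 j
          rw [Finsupp.tsub_apply] at hj
          rw [Finsupp.add_apply]
          simp only [Finsupp.single_apply] at hj ⊢
          by_cases h : i = j
          · simp only [if_pos h] at hj ⊢
            subst h
            omega
          · simp only [if_neg h] at hj ⊢
            omega
        rw [hsi]; simp
      · rw [if_neg h2]

private lemma pderiv_homog' {n dd : ℕ} (i : Fin n) (f : MvPolynomial (Fin n) ℂ)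
    (hf : f.IsHomogeneous dd) : (pderiv i f).IsHomogeneous (dd - 1) := by
  intro m hm
  rw [coeff_pderiv'] at hm
  have hc : coeff (m + Finsupp.single i 1) f ≠ 0 := by
    intro h; rw [h, mul_zero] at hm; exact hm rfl
  have hdeg := hf hc
  have hw : (Finsupp.weight 1 : (Fin n →₀ ℕ) →+ ℕ) = Finsupp.degree := by
    rw [Finsupp.degree_eq_weight_one]; rfl
  rw [hw] at hdeg ⊢
  rw [degree_add'', degree_single''] at hdeg
  omega

private lemma eval_single_eq_coeff' {n D : ℕ} [NeZero n] (p : MvPolynomial (Fin n) ℂ)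
    (hp : p.IsHomogeneous D) :
    eval (Pi.single (0 : Fin n) (1 : ℂ)) p = coeff (Finsupp.single (0 : Fin n) D) p := by
  classical
  rw [eval_eq']
  rw [Finset.sum_eq_single (Finsupp.single (0 : Fin n) D)]
  · have h1 : (∏ j : Fin n,
        ((Pi.single (0 : Fin n) (1 : ℂ) : Fin n → ℂ)) j ^ (Finsupp.single (0 : Fin n) D) j)
        = (1 : ℂ) := by
      apply Finset.prod_eq_one
      intro j _
      by_cases h : j = 0
      · subst h; simp
      · rw [Pi.single_eq_of_ne h, Finsupp.single_apply, if_neg (Ne.symm h), pow_zero]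
    rw [h1, mul_one]
  · intro m hm hne
    have hc : coeff m p ≠ 0 := mem_support_iff.mp hm
    have hdeg : m.degree = D := by
      by_contra h
      exact hc (hp.coeff_eq_zero h)
    have hj : ∃ j : Fin n, j ≠ 0 ∧ m j ≠ 0 := by
      by_contra h
      push_neg at h
      apply hne
      have hm0 : m = Finsupp.single 0 (m 0) := by
        ext j
        by_cases hj0 : j = 0
        · subst hj0; simp
        · rw [Finsupp.single_apply, if_neg (fun hh => hj0 hh.symm)]
          exact h j hj0
      have hd0 : m 0 = D := by
        rw [hm0, degree_single''] at hdeg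
        exact hdeg
      rw [hm0, hd0]
    obtain ⟨j, hj0, hjm⟩ := hj
    rw [Finset.prod_eq_zero (Finset.mem_univ j), mul_zero]
    rw [Pi.single_eq_of_ne hj0]
    exact zero_pow hjm
  · intro h
    rw [notMem_support_iff.mp h, zero_mul]

private lemma coeff_bind_scale {n : ℕ} (c : Fin n → ℂ) (f : MvPolynomial (Fin n) ℂ)
    (m : Fin n →₀ ℕ) :
    coeff m (bind₁ (fun j => C (c j) * X j) f) = (∏ j, c j ^ m j) * coeff m f := by
  classical
  induction f using MvPolynomial.induction_on' with
  | add p q hp hq => simp [hp, hq, mul_add]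
  | monomial s a =>
    rw [bind₁_monomial]
    have hC : (C (∏ x ∈ s.support, c x ^ s x) : MvPolynomial (Fin n) ℂ)
        = ∏ x ∈ s.support, C (c x) ^ s x := by
      rw [map_prod]
      exact Finset.prod_congr rfl fun i _ => map_pow C _ _
    have key : (C a : MvPolynomial (Fin n) ℂ) * ∏ i ∈ s.support, (C (c i) * X i) ^ s i
        = monomial s (a * ∏ i ∈ s.support, c i ^ s i) := by
      rw [monomial_eq, Finsupp.prod,
        Finset.prod_congr rfl (fun i _ => mul_pow (C (c i)) (X i) (s i)),
        Finset.prod_mul_distrib, ← hC, C_mul]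
      ring
    rw [key, coeff_monomial, coeff_monomial]
    by_cases hs : s = m
    · subst hs
      rw [if_pos rfl, if_pos rfl]
      have hsub : ∏ i ∈ s.support, c i ^ s i = ∏ j, c j ^ s j := by
        apply Finset.prod_subset (Finset.subset_univ _)
        intro j _ hj
        rw [Finsupp.notMem_support_iff.mp hj, pow_zero]
      rw [hsub]; ring
    · rw [if_neg hs, if_neg hs, mul_zero]

theorem stmt_9 {n e dd : ℕ} [NeZero n] (he : 1 ≤ e) (ζ : ℂ) (hζ : IsPrimitiveRoot ζ e)
    (d : Fin n → ℕ) (hdpos : ∀ i, 0 < d i) (hddpos : 0 < dd)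
    (hed1 : e ∣ d 0)
    (f : MvPolynomial (Fin n) ℂ) (hhom : f.IsHomogeneous dd)
    (hinv : ∀ x : Fin n → ℂ,
      MvPolynomial.eval
        ((Matrix.diagonal (fun i => ζ ^ ((1 : ℤ) - (d i : ℤ)))).mulVec x) f
        = MvPolynomial.eval x f)
    (hfe₁ : MvPolynomial.eval (Pi.single (0 : Fin n) 1) f = 0)
    (hmod : ∀ k : Fin n, k ≠ 0 → ¬ (dd ≡ d k [MOD e])) :
    ∀ i, MvPolynomial.eval (Pi.single (0 : Fin n) 1) (pderiv i f) = 0 := by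
  classical
  set c : Fin n → ℂ := fun i => ζ ^ ((1 : ℤ) - (d i : ℤ)) with hc
  have hζne : ζ ≠ 0 := hζ.ne_zero (by omega)
  have hg : bind₁ (fun j => (C (c j) : MvPolynomial (Fin n) ℂ) * X j) f = f := by
    apply MvPolynomial.funext
    intro x
    have h1 : eval x (bind₁ (fun j => (C (c j) : MvPolynomial (Fin n) ℂ) * X j) f)
        = eval (fun j => c j * x j) f := by
      show eval₂Hom (RingHom.id ℂ) x _ = _
      rw [eval₂Hom_bind₁]
      simp
    have hv : (Matrix.diagonal c).mulVec x = fun j => c j * x j := by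
      funext j
      rw [mulVec_diagonal]
    rw [h1, ← hinv x, hv]
  have hcoeff : ∀ m : Fin n →₀ ℕ, (∏ j, c j ^ m j) ≠ 1 → coeff m f = 0 := by
    intro m hm
    have hbs := coeff_bind_scale c f m
    rw [hg] at hbs
    by_contra hcm
    exact hm (mul_right_cancel₀ hcm (by rw [one_mul, ← hbs]))
  have hkey : coeff (Finsupp.single (0 : Fin n) dd) f = 0 := by
    rw [← eval_single_eq_coeff' f hhom]
    exact hfe₁
  intro i
  have hpd := pderiv_homog' i f hhom
  rw [eval_single_eq_coeff' _ hpd, coeff_pderiv']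
  by_cases hi : i = 0
  · subst hi
    have hsum : Finsupp.single (0 : Fin n) (dd - 1) + Finsupp.single (0 : Fin n) 1
        = Finsupp.single (0 : Fin n) dd := by
      rw [← Finsupp.single_add]
      congr 1
      omega
    rw [hsum, hkey, mul_zero]
  · set m := Finsupp.single (0 : Fin n) (dd - 1) + Finsupp.single i 1 with hmm
    have hcoeffm : coeff m f = 0 := by
      apply hcoeff
      have hm0 : m 0 = dd - 1 := by
        rw [hmm, Finsupp.add_apply, Finsupp.single_eq_same, Finsupp.single_apply,
          if_neg hi, add_zero]
      have hmi : m i = 1 := by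
        rw [hmm, Finsupp.add_apply, Finsupp.single_eq_same, Finsupp.single_apply,
          if_neg (fun hh => hi hh.symm), zero_add]
      have hmj : ∀ j : Fin n, j ≠ 0 → j ≠ i → m j = 0 := by
        intro j hj0 hji
        rw [hmm, Finsupp.add_apply, Finsupp.single_apply, Finsupp.single_apply,
          if_neg (fun hh => hj0 hh.symm), if_neg (fun hh => hji hh.symm), add_zero]
      have hset : (∏ j, c j ^ m j) = ∏ j ∈ ({0, i} : Finset (Fin n)), c j ^ m j := by
        symm
        apply Finset.prod_subset (Finset.subset_univ _)
        intro j _ hj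
        simp only [Finset.mem_insert, Finset.mem_singleton, not_or] at hj
        rw [hmj j hj.1 hj.2, pow_zero]
      have hprod : (∏ j, c j ^ m j)
          = ζ ^ (((1 : ℤ) - d 0) * ((dd : ℤ) - 1) + ((1 : ℤ) - d i)) := by
        rw [hset, Finset.prod_pair (Ne.symm hi), hm0, hmi, pow_one]
        show (ζ ^ ((1 : ℤ) - (d 0 : ℤ))) ^ (dd - 1) * ζ ^ ((1 : ℤ) - (d i : ℤ)) = _
        rw [← zpow_natCast (ζ ^ ((1 : ℤ) - (d 0 : ℤ))) (dd - 1), ← _root_.zpow_mul,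
          ← zpow_add₀ hζne]
        congr 1
        have hcast : ((dd - 1 : ℕ) : ℤ) = (dd : ℤ) - 1 := by omega
        rw [hcast]
      rw [hprod]
      intro h1
      rw [hζ.zpow_eq_one_iff_dvd] at h1
      apply hmod i hi
      rw [Nat.modEq_iff_dvd]
      obtain ⟨t, ht⟩ := hed1
      obtain ⟨u, hu⟩ := h1
      refine ⟨-u - t * ((dd : ℤ) - 1), ?_⟩
      have ht' : (d 0 : ℤ) = (e : ℤ) * t := by exact_mod_cast ht
      linear_combination -hu - ((dd : ℤ) - 1) * ht'
    rw [hcoeffm, mul_zero]
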